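/- Let G = (V, E) be a finite simple undirected graph, let k ∈ ℕ, and let e = (u, v) and e₁ be two edges each joining non-adjacent vertices of G. If both endpoints u and v of e belong to V(C_k(G + e₁)), then V(C_k(G + e)) ⊆ V(C_k(G + e₁)). -/
import Mathlib


open SimpleGraph

variable {V : Type*}

/-- The vertex set of the `k`-core of `G`: the largest set `S` such that every
vertex of `S` has at least `k` neighbors in `S` (realized as the union of all
such sets). -/
def coreSet (G : SimpleGraph V) (k : ℕ) : Set V :=
  {u | ∃ S : Set V, u ∈ S ∧ ∀ v ∈ S, k ≤ (S ∩ G.neighborSet v).ncard}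

/-- The followers of a set `A` of anchor edges: vertices of the `k`-core of `G + A`
that are not in the `k`-core of `G`. -/
def followers (G : SimpleGraph V) (k : ℕ) (A : Set (Sym2 V)) : Set V :=
  coreSet (G ⊔ SimpleGraph.fromEdgeSet A) k \ coreSet G k

lemma coreSet_spec [Fintype V] (G : SimpleGraph V) (k : ℕ) {w : V}
    (hw : w ∈ coreSet G k) : k ≤ (coreSet G k ∩ G.neighborSet w).ncard := by
  obtain ⟨S, hwS, hS⟩ := hw
  have hsub : S ⊆ coreSet G k := fun s hs => ⟨S, hs, hS⟩
  calc k ≤ (S ∩ G.neighborSet w).ncard := hS w hwS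
    _ ≤ _ := Set.ncard_le_ncard (Set.inter_subset_inter_left _ hsub) (Set.toFinite _)

/-- Let `e = (u, v)` and `e₁ = (u₁, v₁)` be two edges each joining non-adjacent
vertices of `G`. If both endpoints of `e` belong to the `k`-core of `G + e₁`, then
the `k`-core of `G + e` is contained in the `k`-core of `G + e₁`. -/
theorem stmt_5 [Fintype V] (G : SimpleGraph V) (k : ℕ)
    (u v : V) (huv : u ≠ v) (hadj : ¬ G.Adj u v)
    (u₁ v₁ : V) (hu₁v₁ : u₁ ≠ v₁) (hadj₁ : ¬ G.Adj u₁ v₁)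
    (hu : u ∈ coreSet (G ⊔ SimpleGraph.fromEdgeSet {s(u₁, v₁)}) k)
    (hv : v ∈ coreSet (G ⊔ SimpleGraph.fromEdgeSet {s(u₁, v₁)}) k) :
    coreSet (G ⊔ SimpleGraph.fromEdgeSet {s(u, v)}) k ⊆
      coreSet (G ⊔ SimpleGraph.fromEdgeSet {s(u₁, v₁)}) k := by
  set G₁ := G ⊔ SimpleGraph.fromEdgeSet {s(u₁, v₁)} with hG₁
  set G₂ := G ⊔ SimpleGraph.fromEdgeSet {s(u, v)} with hG₂
  intro x hx
  refine ⟨coreSet G₂ k ∪ coreSet G₁ k, Or.inl hx, ?_⟩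
  intro w hw
  by_cases hw1 : w ∈ coreSet G₁ k
  · calc k ≤ (coreSet G₁ k ∩ G₁.neighborSet w).ncard := coreSet_spec G₁ k hw1
      _ ≤ _ := Set.ncard_le_ncard
          (Set.inter_subset_inter_left _ Set.subset_union_right) (Set.toFinite _)
  · have hw2 : w ∈ coreSet G₂ k := hw.resolve_right hw1
    have hwu : w ≠ u := fun h => hw1 (h ▸ hu)
    have hwv : w ≠ v := fun h => hw1 (h ▸ hv)
    have hN : G₂.neighborSet w ⊆ G₁.neighborSet w := by
      intro y hy
      simp only [hG₁, hG₂, SimpleGraph.mem_neighborSet, sup_adj, fromEdgeSet_adj,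
        Set.mem_singleton_iff] at hy ⊢
      rcases hy with hy | ⟨hy, _⟩
      · exact Or.inl hy
      · rw [Sym2.eq_iff] at hy
        rcases hy with ⟨h1, h2⟩ | ⟨h1, h2⟩
        · exact absurd h1 hwu
        · exact absurd h1 hwv
    calc k ≤ (coreSet G₂ k ∩ G₂.neighborSet w).ncard := coreSet_spec G₂ k hw2
      _ ≤ _ := Set.ncard_le_ncard
          (Set.inter_subset_inter Set.subset_union_left hN) (Set.toFinite _)
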